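/- Let G be an amenable group. For every invariant ideal I on G there exists a Banach measure μ on G such that I ⊆ N_μ, i.e., μ(A) = 0 for every A ∈ I. -/

import Mathlib

open scoped Pointwise Topology

/-- A subset `A` of a group `G` is *large* if `F * A = G` for some finite `F ⊆ G`. -/
def IsLarge {G : Type*} [Group G] (A : Set G) : Prop :=
  ∃ F : Finset G, (F : Set G) * A = Set.univ

/-- A subset `A` of a group `G` is *small* if `B \ A` is large for every large `B ⊆ G`. -/
def IsSmallSet {G : Type*} [Group G] (A : Set G) : Prop :=
  ∀ B : Set G, IsLarge B → IsLarge (B \ A)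

/-- A translation-invariant ideal on a group `G`: a proper family of subsets of `G`
containing the empty set, closed under subsets, finite unions and left translations. -/
structure IsInvariantIdeal (G : Type*) [Group G] (I : Set (Set G)) : Prop where
  proper : I ≠ Set.univ
  empty_mem : ∅ ∈ I
  subset_mem : ∀ ⦃A B : Set G⦄, A ∈ I → B ⊆ A → B ∈ I
  union_mem : ∀ ⦃A B : Set G⦄, A ∈ I → B ∈ I → A ∪ B ∈ I
  translate_mem : ∀ (x : G) ⦃A : Set G⦄, A ∈ I → (fun a => x * a) '' A ∈ I

/-- A subset `A ⊆ G` is `I`-large if `G \ FA ∈ I` for some finite `F ⊆ G`. -/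
def IsILarge {G : Type*} [Group G] (I : Set (Set G)) (A : Set G) : Prop :=
  ∃ F : Finset G, (Set.univ : Set G) \ ((F : Set G) * A) ∈ I

/-- A subset `A ⊆ G` is `I`-small if `L \ A` is `I`-large for every `I`-large `L ⊆ G`. -/
def IsISmall {G : Type*} [Group G] (I : Set (Set G)) (A : Set G) : Prop :=
  ∀ L : Set G, IsILarge I L → IsILarge I (L \ A)

/-- A *Banach measure* on a group `G`: a finitely additive, left-invariant probability
"measure" defined on all subsets of `G`, with values in `[0,1]`. -/
structure BanachMeasure (G : Type*) [Group G] where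
  toFun : Set G → ℝ
  nonneg : ∀ A : Set G, 0 ≤ toFun A
  le_one : ∀ A : Set G, toFun A ≤ 1
  additive : ∀ A B : Set G, Disjoint A B → toFun (A ∪ B) = toFun A + toFun B
  measure_univ : toFun Set.univ = 1
  invariant : ∀ (x : G) (A : Set G), toFun ((fun a => x * a) '' A) = toFun A

/-- The Følner condition: for every finite `F ⊆ G` and `ε > 0` there is a nonempty finite
`E ⊆ G` with `|E △ xE| < ε·|E|` for all `x ∈ F`.  A group is *amenable* iff it satisfies it. -/
def FolnerCond (G : Type*) [Group G] : Prop :=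
  ∀ (F : Finset G) (ε : ℝ), 0 < ε → ∃ E : Finset G, E.Nonempty ∧
    ∀ x ∈ F, ((symmDiff (E : Set G) ((fun a => x * a) '' (E : Set G))).ncard : ℝ) < ε * E.card

section AuxBM

set_option linter.unusedSectionVars false

variable {G : Type*} [Group G] {I : Set (Set G)}

private noncomputable def dens (B : Set G) (E : Finset G) : ℝ :=
  (((E : Set G) ∩ B).ncard : ℝ) / E.card

private lemma dens_mem_Icc (B : Set G) (E : Finset G) : dens B E ∈ Set.Icc (0:ℝ) 1 := by
  constructor
  · unfold dens; positivity
  · rcases E.eq_empty_or_nonempty with rfl | hE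
    · simp [dens]
    · have h1 : ((E : Set G) ∩ B).ncard ≤ E.card := by
        calc ((E : Set G) ∩ B).ncard ≤ (E : Set G).ncard :=
              Set.ncard_le_ncard Set.inter_subset_left E.finite_toSet
          _ = E.card := Set.ncard_coe_finset E
      have h2 : (0:ℝ) < E.card := by exact_mod_cast hE.card_pos
      rw [dens, div_le_one h2]
      exact_mod_cast h1

private lemma II.univ_not_mem (hI : IsInvariantIdeal G I) : Set.univ ∉ I := fun h =>
  hI.proper (Set.eq_univ_of_forall fun A => hI.subset_mem h (Set.subset_univ A))

private lemma II.biUnion_mem (hI : IsInvariantIdeal G I) (s : Finset G) (f : G → Set G)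
    (hf : ∀ e ∈ s, f e ∈ I) : (⋃ e ∈ s, f e) ∈ I := by
  classical
  induction s using Finset.induction_on with
  | empty => simpa using hI.empty_mem
  | @insert a s ha ih =>
      rw [Finset.set_biUnion_insert]
      exact hI.union_mem (hf a (Finset.mem_insert_self a s))
        (ih fun e he => hf e (Finset.mem_insert_of_mem he))

private lemma exists_folner_avoid (hG : FolnerCond G) (hI : IsInvariantIdeal G I)
    (F : Finset G) (n : ℕ) (A : Set G) (hA : A ∈ I) :
    ∃ E : Finset G, E.Nonempty ∧ ((E : Set G) ∩ A = (∅ : Set G)) ∧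
      ∀ x ∈ F, ((symmDiff (E : Set G) ((fun a => x * a) '' (E : Set G))).ncard : ℝ)
        < (1 / (n + 1)) * E.card := by
  classical
  obtain ⟨E₀, hE₀ne, hE₀⟩ := hG F (1 / (n + 1)) (by positivity)
  set T : Set G := ⋃ e ∈ E₀, (fun a => e⁻¹ * a) '' A with hT
  have hTI : T ∈ I := II.biUnion_mem hI _ _ fun e _ => hI.translate_mem _ hA
  have hTne : T ≠ Set.univ := fun h => II.univ_not_mem hI (h ▸ hTI)
  obtain ⟨g, hg⟩ : ∃ g, g ∉ T := by
    by_contra h; push_neg at h; exact hTne (Set.eq_univ_of_forall h)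
  have hinj : Function.Injective (fun a : G => a * g) := fun a b h => by
    simpa using mul_right_cancel h
  refine ⟨E₀.image (· * g), hE₀ne.image _, ?_, ?_⟩
  · ext y
    simp only [Finset.coe_image, Set.mem_inter_iff, Set.mem_image, Finset.mem_coe,
      Set.mem_empty_iff_false, iff_false, not_and]
    rintro ⟨e, he, rfl⟩ hy
    exact hg (Set.mem_biUnion he ⟨e * g, hy, by group⟩)
  · intro x hx
    have hcard : (E₀.image (· * g)).card = E₀.card := Finset.card_image_of_injective _ hinj
    have hcoe : ((E₀.image (· * g) : Finset G) : Set G) = (fun a : G => a * g) '' ↑E₀ :=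
      Finset.coe_image
    rw [hcoe, hcard]
    have hcomm : (fun a => x * a) '' ((fun a : G => a * g) '' (E₀ : Set G))
        = (fun a : G => a * g) '' ((fun a => x * a) '' (E₀ : Set G)) := by
      rw [Set.image_image, Set.image_image]
      simp [mul_assoc]
    rw [hcomm, ← Set.image_symmDiff hinj, Set.ncard_image_of_injective _ hinj]
    exact hE₀ x hx

private lemma ncard_inter_le_add (S T A : Set G) (hS : S.Finite) (hT : T.Finite) :
    (T ∩ A).ncard ≤ (S ∩ A).ncard + (symmDiff S T).ncard := by
  have hsymm : (symmDiff S T).Finite := by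
    rw [Set.symmDiff_def]
    exact (hS.diff (t := T)).union (hT.diff (t := S))
  have hsub : T ∩ A ⊆ (S ∩ A) ∪ symmDiff S T := by
    intro y hy
    by_cases h : y ∈ S
    · exact Or.inl ⟨h, hy.2⟩
    · exact Or.inr (Set.mem_symmDiff.mpr (Or.inr ⟨hy.1, h⟩))
  calc (T ∩ A).ncard ≤ ((S ∩ A) ∪ symmDiff S T).ncard :=
        Set.ncard_le_ncard hsub ((hS.inter_of_left A).union hsymm)
    _ ≤ (S ∩ A).ncard + (symmDiff S T).ncard := Set.ncard_union_le _ _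

private lemma abs_dens_sub_le (x : G) (A : Set G) (E : Finset G) :
    |dens ((fun a => x * a) '' A) E - dens A E| ≤
      ((symmDiff (E : Set G) ((fun a => x⁻¹ * a) '' (E : Set G))).ncard : ℝ) / E.card := by
  rcases E.eq_empty_or_nonempty with rfl | hEne
  · simp [dens]
  set S : Set G := (E : Set G) with hSdef
  set T : Set G := (fun a => x⁻¹ * a) '' S with hTdef
  have hinj : Function.Injective (fun a : G => x⁻¹ * a) := fun a b h => by
    simpa using mul_left_cancel h
  have hS : S.Finite := E.finite_toSet
  have hT : T.Finite := hS.image _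
  have h1 : (S ∩ (fun a => x * a) '' A).ncard = (T ∩ A).ncard := by
    rw [← Set.ncard_image_of_injective (S ∩ (fun a => x * a) '' A) hinj]
    congr 1
    ext y
    simp only [hTdef, Set.mem_image, Set.mem_inter_iff]
    constructor
    · rintro ⟨z, ⟨hzS, a, haA, rfl⟩, rfl⟩
      exact ⟨⟨x * a, hzS, rfl⟩, by simpa using haA⟩
    · rintro ⟨⟨z, hzS, rfl⟩, hyA⟩
      exact ⟨z, ⟨hzS, ⟨x⁻¹ * z, hyA, by group⟩⟩, rfl⟩
  have h2 := ncard_inter_le_add S T A hS hT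
  have h3 := ncard_inter_le_add T S A hT hS
  rw [symmDiff_comm] at h3
  have h2' : ((T ∩ A).ncard : ℝ) ≤ ((S ∩ A).ncard : ℝ) + ((symmDiff S T).ncard : ℝ) := by
    exact_mod_cast h2
  have h3' : ((S ∩ A).ncard : ℝ) ≤ ((T ∩ A).ncard : ℝ) + ((symmDiff S T).ncard : ℝ) := by
    exact_mod_cast h3
  have habs : |((T ∩ A).ncard : ℝ) - ((S ∩ A).ncard : ℝ)| ≤ ((symmDiff S T).ncard : ℝ) := by
    rw [abs_sub_le_iff]
    constructor <;> linarith
  have hdiff : dens ((fun a => x * a) '' A) E - dens A E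
      = (((T ∩ A).ncard : ℝ) - ((S ∩ A).ncard : ℝ)) / E.card := by
    rw [dens, dens, div_sub_div_same, h1]
  rw [hdiff, abs_div, abs_of_nonneg (by positivity : (0:ℝ) ≤ (E.card : ℝ))]
  have hcard : (0:ℝ) < E.card := by exact_mod_cast hEne.card_pos
  gcongr

end AuxBM

/-- In an amenable group, every invariant ideal `I` lies in the null ideal `N_μ` of
some Banach measure `μ`. -/
theorem exists_banachMeasure_null_on_ideal {G : Type*} [Group G] (hG : FolnerCond G)
    (I : Set (Set G)) (hI : IsInvariantIdeal G I) :
    ∃ μ : BanachMeasure G, ∀ A ∈ I, μ.toFun A = 0 := by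
  classical
  -- The directed family of sets of "good" Følner sets
  let S : Finset G × ℕ × {A : Set G // A ∈ I} → Set (Finset G) := fun i =>
    {E | E.Nonempty ∧ ((E : Set G) ∩ i.2.2.1 = (∅ : Set G)) ∧
      ∀ x ∈ i.1, ((symmDiff (E : Set G) ((fun a => x * a) '' (E : Set G))).ncard : ℝ)
        < (1 / (i.2.1 + 1)) * E.card}
  have hSne : ∀ i, (S i).Nonempty := by
    rintro ⟨F, n, A, hA⟩
    obtain ⟨E, h1, h2, h3⟩ := exists_folner_avoid hG hI F n A hA
    exact ⟨E, h1, h2, h3⟩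
  have hmono : ∀ i j : Finset G × ℕ × {A : Set G // A ∈ I},
      i.1 ⊆ j.1 → i.2.1 ≤ j.2.1 → i.2.2.1 ⊆ j.2.2.1 → S j ⊆ S i := by
    rintro ⟨F₁, n₁, A₁⟩ ⟨F₂, n₂, A₂⟩ hF hn hA E ⟨hE1, hE2, hE3⟩
    refine ⟨hE1, ?_, ?_⟩
    · exact Set.eq_empty_of_subset_empty
        (hE2 ▸ Set.inter_subset_inter_right _ hA)
    · intro x hx
      refine lt_of_lt_of_le (hE3 x (hF hx)) ?_
      have h1 : (1 : ℝ) / (n₂ + 1) ≤ 1 / (n₁ + 1) := by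
        apply one_div_le_one_div_of_le (by positivity)
        exact_mod_cast Nat.succ_le_succ hn
      exact mul_le_mul_of_nonneg_right h1 (by positivity)
  have hdir : Directed (· ≥ ·) (fun i => Filter.principal (S i)) := by
    rintro ⟨F₁, n₁, A₁, hA₁⟩ ⟨F₂, n₂, A₂, hA₂⟩
    refine ⟨⟨F₁ ∪ F₂, max n₁ n₂, ⟨A₁ ∪ A₂, hI.union_mem hA₁ hA₂⟩⟩,
      Filter.principal_mono.mpr ?_, Filter.principal_mono.mpr ?_⟩
    · exact hmono _ _ Finset.subset_union_left (le_max_left _ _) Set.subset_union_left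
    · exact hmono _ _ Finset.subset_union_right (le_max_right _ _) Set.subset_union_right
  have hNonempty : Nonempty (Finset G × ℕ × {A : Set G // A ∈ I}) :=
    ⟨⟨∅, 0, ⟨∅, hI.empty_mem⟩⟩⟩
  have hL : Filter.NeBot (⨅ i, Filter.principal (S i)) :=
    Filter.iInf_neBot_of_directed' hdir fun i => Filter.principal_neBot_iff.mpr (hSne i)
  let U : Ultrafilter (Finset G) := @Ultrafilter.of _ (⨅ i, Filter.principal (S i)) hL
  have hU : (U : Filter (Finset G)) ≤ ⨅ i, Filter.principal (S i) := Ultrafilter.of_le _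
  have hmem : ∀ i, ∀ᶠ E in (U : Filter (Finset G)), E ∈ S i := fun i =>
    (hU.trans (iInf_le _ i)) (Filter.mem_principal_self _)
  -- existence of limits of densities
  have hlim : ∀ B : Set G, ∃ r, r ∈ Set.Icc (0:ℝ) 1 ∧
      Filter.Tendsto (dens B) (U : Filter (Finset G)) (𝓝 r) := by
    intro B
    have h1 : (Ultrafilter.map (dens B) U : Filter ℝ) ≤ Filter.principal (Set.Icc 0 1) := by
      rw [Filter.le_principal_iff, Ultrafilter.coe_map, Filter.mem_map]
      exact Filter.Eventually.of_forall fun E => dens_mem_Icc B E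
    obtain ⟨r, hr, hle⟩ := isCompact_Icc.ultrafilter_le_nhds (Ultrafilter.map (dens B) U) h1
    exact ⟨r, hr, hle⟩
  choose m hm01 hmt using hlim
  have hNB : Filter.NeBot (U : Filter (Finset G)) := U.neBot
  -- eventual nonemptiness
  have hne : ∀ᶠ E in (U : Filter (Finset G)), E.Nonempty :=
    (hmem ⟨∅, 0, ⟨∅, hI.empty_mem⟩⟩).mono fun E hE => hE.1
  refine ⟨⟨m, fun A => (hm01 A).1, fun A => (hm01 A).2, ?_, ?_, ?_⟩, ?_⟩
  · -- additivity
    intro A B hAB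
    refine tendsto_nhds_unique (hmt (A ∪ B)) ?_
    have hpt : ∀ E : Finset G, dens (A ∪ B) E = dens A E + dens B E := by
      intro E
      have hcount : (((E : Set G) ∩ (A ∪ B)).ncard : ℝ)
          = (((E : Set G) ∩ A).ncard : ℝ) + (((E : Set G) ∩ B).ncard : ℝ) := by
        rw [Set.inter_union_distrib_left]
        have := Set.ncard_union_eq (Disjoint.mono Set.inter_subset_right
          Set.inter_subset_right hAB) (E.finite_toSet.inter_of_left A)
          (E.finite_toSet.inter_of_left B)
        exact_mod_cast this
      rw [dens, dens, dens, hcount, add_div]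
    exact ((hmt A).add (hmt B)).congr fun E => (hpt E).symm
  · -- measure of univ
    refine tendsto_nhds_unique (hmt Set.univ) ?_
    refine Filter.Tendsto.congr' ?_ (tendsto_const_nhds (x := (1:ℝ)))
    filter_upwards [hne] with E hE
    have hcard : ((E.card : ℝ)) ≠ 0 := by
      exact_mod_cast hE.card_pos.ne'
    rw [dens, Set.inter_univ, Set.ncard_coe_finset, div_self hcard]
  · -- invariance
    intro x A
    have hdiff : Filter.Tendsto (fun E => dens ((fun a => x * a) '' A) E - dens A E)
        (U : Filter (Finset G)) (𝓝 0) := by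
      rw [NormedAddCommGroup.tendsto_nhds_zero]
      intro ε hε
      obtain ⟨n, hn⟩ := exists_nat_one_div_lt hε
      filter_upwards [hmem ⟨{x⁻¹}, n, ⟨∅, hI.empty_mem⟩⟩] with E hE
      obtain ⟨hEne, -, hfol⟩ := hE
      have h1 := hfol x⁻¹ (Finset.mem_singleton_self _)
      have hcard : (0:ℝ) < E.card := by exact_mod_cast hEne.card_pos
      have h2 : ((symmDiff (E : Set G) ((fun a => x⁻¹ * a) '' (E : Set G))).ncard : ℝ) / E.card
          < 1 / (n + 1) := by
        rw [div_lt_iff₀ hcard]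
        exact h1
      calc ‖dens ((fun a => x * a) '' A) E - dens A E‖
          = |dens ((fun a => x * a) '' A) E - dens A E| := Real.norm_eq_abs _
        _ ≤ _ := abs_dens_sub_le x A E
        _ < 1 / (n + 1) := h2
        _ < ε := hn
    have h3 : Filter.Tendsto (dens ((fun a => x * a) '' A)) (U : Filter (Finset G))
        (𝓝 (0 + m A)) := by
      refine (hdiff.add (hmt A)).congr fun E => ?_
      ring
    have := tendsto_nhds_unique (hmt ((fun a => x * a) '' A)) h3
    rw [this, zero_add]
  · -- null on the ideal
    intro A hA
    refine tendsto_nhds_unique (hmt A) ?_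
    refine Filter.Tendsto.congr' ?_ (tendsto_const_nhds (x := (0:ℝ)))
    filter_upwards [hmem ⟨∅, 0, ⟨A, hA⟩⟩] with E hE
    rw [dens, hE.2.1, Set.ncard_empty, Nat.cast_zero, zero_div]
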